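/- arXiv:1512.03858 — 9 statements merged into one kernel-verified Lean document; each statement's English description precedes it below -/
import Mathlib

section
/- If 0 < ℓ < W(1), then 0 < κ(ℓ) < √2 − 1; consequently 1 − 2κ(ℓ) > 0 and (1/2)(√(1 − 2κ(ℓ))/κ(ℓ) + 1) > 1, so that the tube radius formula cosh²(r₀) = (1/2)(√(1 − 2κ(ℓ))/κ(ℓ) + 1) defines a unique positive real number r₀. -/
/-- Inverse hyperbolic cosine: `arcosh y = log (y + √(y² - 1))` for `y ≥ 1`. -/
noncomputable def arcosh (y : ℝ) : ℝ := Real.log (y + Real.sqrt (y ^ 2 - 1))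

/-- The function `W` from the paper. -/
noncomputable def W (x : ℝ) : ℝ :=
  (Real.sqrt 3 / (4 * Real.pi)) *
    (arcosh (1 + 1 / (1 + Real.sqrt (1 + (8 * x ^ 2 - 8 * x + 1) ^ 2)))) ^ 2

/-- The function `κ(ℓ) = cosh(√(4πℓ/√3)) - 1`. -/
noncomputable def κ (ℓ : ℝ) : ℝ :=
  Real.cosh (Real.sqrt (4 * Real.pi * ℓ / Real.sqrt 3)) - 1

/-- The tube radius `r₀(ℓ)`, the positive real with
`cosh²(r₀(ℓ)) = (1/2)(√(1 - 2κ(ℓ))/κ(ℓ) + 1)`. -/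
noncomputable def r₀ (ℓ : ℝ) : ℝ :=
  arcosh (Real.sqrt ((1 / 2) * (Real.sqrt (1 - 2 * κ ℓ) / κ ℓ + 1)))



lemma cosh_arcosh {y : ℝ} (hy : 1 ≤ y) : Real.cosh (arcosh y) = y := by
  have h1 : (1:ℝ) ≤ y ^ 2 := by nlinarith
  have hs : Real.sqrt (y ^ 2 - 1) ^ 2 = y ^ 2 - 1 := Real.sq_sqrt (by linarith)
  have hsn : 0 ≤ Real.sqrt (y ^ 2 - 1) := Real.sqrt_nonneg _
  have hpos : 0 < y + Real.sqrt (y ^ 2 - 1) := by linarith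
  rw [arcosh, Real.cosh_eq, Real.exp_log hpos, Real.exp_neg, Real.exp_log hpos]
  have hinv : (y + Real.sqrt (y ^ 2 - 1))⁻¹ = y - Real.sqrt (y ^ 2 - 1) := by
    rw [inv_eq_iff_eq_inv, eq_comm, inv_eq_iff_eq_inv, inv_eq_one_div,
      eq_div_iff (by nlinarith)]
    nlinarith
  rw [hinv]; ring

lemma arcosh_pos {y : ℝ} (hy : 1 < y) : 0 < arcosh y := by
  apply Real.log_pos
  have : 0 ≤ Real.sqrt (y ^ 2 - 1) := Real.sqrt_nonneg _
  linarith

lemma sqrt2_lt : Real.sqrt 2 < 3/2 := by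
  nlinarith [Real.sq_sqrt (by norm_num : (2:ℝ) ≥ 0), Real.sqrt_nonneg 2]

theorem tube_radius_well_defined (ℓ : ℝ) (h0 : 0 < ℓ) (h1 : ℓ < W 1) :
    (0 < κ ℓ ∧ κ ℓ < Real.sqrt 2 - 1) ∧
    1 - 2 * κ ℓ > 0 ∧
    (1 / 2) * (Real.sqrt (1 - 2 * κ ℓ) / κ ℓ + 1) > 1 ∧
    ∃! r : ℝ, 0 < r ∧
      (Real.cosh r) ^ 2 = (1 / 2) * (Real.sqrt (1 - 2 * κ ℓ) / κ ℓ + 1) := by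
  have hs2 : Real.sqrt 2 ^ 2 = 2 := Real.sq_sqrt (by norm_num)
  have hs2n : 0 ≤ Real.sqrt 2 := Real.sqrt_nonneg 2
  have h12 : (1:ℝ) < Real.sqrt 2 := by nlinarith
  -- simplify W 1
  have hW : W 1 = Real.sqrt 3 / (4 * Real.pi) * arcosh (Real.sqrt 2) ^ 2 := by
    have e1 : (1:ℝ) + (8 * 1 ^ 2 - 8 * 1 + 1) ^ 2 = 2 := by norm_num
    have e2 : 1 + 1 / (1 + Real.sqrt 2) = Real.sqrt 2 := by
      have hne : (1 + Real.sqrt 2) ≠ 0 := by positivity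
      field_simp
      nlinarith
    rw [W, e1, e2]
  set A := arcosh (Real.sqrt 2) with hA
  have hApos : 0 < A := arcosh_pos h12
  have hpi : 0 < Real.pi := Real.pi_pos
  have hs3 : 0 < Real.sqrt 3 := Real.sqrt_pos.2 (by norm_num)
  set t := Real.sqrt (4 * Real.pi * ℓ / Real.sqrt 3) with ht
  have htpos : 0 < t := Real.sqrt_pos.2 (by positivity)
  have htA : t < A := by
    rw [ht, Real.sqrt_lt' hApos]
    rw [hW] at h1
    have h1' : ℓ * (4 * Real.pi) < Real.sqrt 3 * A ^ 2 := by
      rw [div_mul_eq_mul_div] at h1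
      exact (lt_div_iff₀ (by positivity)).1 h1
    rw [div_lt_iff₀ hs3]
    nlinarith
  have hcoshlt : Real.cosh t < Real.sqrt 2 := by
    have : Real.cosh t < Real.cosh A := by
      rw [Real.cosh_lt_cosh, abs_of_pos htpos, abs_of_pos hApos]; exact htA
    rwa [hA, cosh_arcosh h12.le] at this
  have hκpos : 0 < κ ℓ := by
    have := Real.one_lt_cosh.2 (ne_of_gt htpos)
    simp only [κ, ← ht]; linarith
  have hκlt : κ ℓ < Real.sqrt 2 - 1 := by simp only [κ, ← ht]; linarith
  have hk2 : Real.sqrt 2 < 3/2 := sqrt2_lt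
  have h1m2 : 1 - 2 * κ ℓ > 0 := by linarith
  -- κ² < 1 - 2κ
  have hsq : κ ℓ ^ 2 < 1 - 2 * κ ℓ := by nlinarith
  have hssgt : κ ℓ < Real.sqrt (1 - 2 * κ ℓ) := (Real.lt_sqrt hκpos.le).2 hsq
  have hdiv : 1 < Real.sqrt (1 - 2 * κ ℓ) / κ ℓ := (one_lt_div hκpos).2 hssgt
  have hc : (1:ℝ) < (1 / 2) * (Real.sqrt (1 - 2 * κ ℓ) / κ ℓ + 1) := by linarith
  refine ⟨⟨hκpos, hκlt⟩, h1m2, hc, ?_⟩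
  set c := (1 / 2) * (Real.sqrt (1 - 2 * κ ℓ) / κ ℓ + 1) with hcdef
  have hsc : 1 < Real.sqrt c := by
    rw [show (1:ℝ) = Real.sqrt 1 by simp]
    exact Real.sqrt_lt_sqrt (by norm_num) hc
  refine ⟨arcosh (Real.sqrt c), ⟨arcosh_pos hsc, ?_⟩, ?_⟩
  · rw [cosh_arcosh hsc.le, Real.sq_sqrt (by linarith)]
  · rintro r' ⟨hr', hr'2⟩
    have hre : Real.cosh r' = Real.cosh (arcosh (Real.sqrt c)) := by
      rw [cosh_arcosh hsc.le]
      nlinarith [Real.one_le_cosh r', Real.sqrt_nonneg c,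
        Real.sq_sqrt (show (0:ℝ) ≤ c by linarith)]
    exact Real.cosh_strictMonoOn.injOn (Set.mem_Ici.2 hr'.le)
      (Set.mem_Ici.2 (arcosh_pos hsc).le) hre
end

section
/- (Proposition 3.3, meridian disk area) Let g ≥ 2 be an integer and let 0 < ℓ < W(g). Then the tube radius r₀(ℓ) satisfies cosh(r₀(ℓ)) > 2g − 1; consequently the area 2π(cosh(r₀(ℓ)) − 1) of the meridian disk of the maximal solid tube exceeds 2π(2g − 2), the hyperbolic area of a closed surface of genus g. -/
theorem meridian_disk_area (g : ℕ) (hg : 2 ≤ g) (ℓ : ℝ) (h0 : 0 < ℓ)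
    (h1 : ℓ < W g) (r : ℝ) (hr : 0 < r)
    (hcosh : (Real.cosh r) ^ 2 = (1 / 2) * (Real.sqrt (1 - 2 * κ ℓ) / κ ℓ + 1)) :
    Real.cosh r > 2 * (g : ℝ) - 1 ∧
    2 * Real.pi * (Real.cosh r - 1) > 2 * Real.pi * (2 * (g : ℝ) - 2) := by
  have hg1 : (2:ℝ) ≤ (g:ℝ) := by exact_mod_cast hg
  set a : ℝ := 8 * (g:ℝ) ^ 2 - 8 * (g:ℝ) + 1 with ha
  have ha17 : (17:ℝ) ≤ a := by nlinarith
  set s : ℝ := 1 + Real.sqrt (1 + a ^ 2) with hs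
  have hsq : Real.sqrt (1 + a ^ 2) ^ 2 = 1 + a ^ 2 := Real.sq_sqrt (by positivity)
  have hs2 : 2 ≤ s := by
    have h' := Real.sqrt_le_sqrt (show (1:ℝ) ≤ 1 + a ^ 2 by nlinarith)
    rw [Real.sqrt_one] at h'
    linarith
  have hs0 : 0 < s := by linarith
  have hss : s ^ 2 = a ^ 2 + 2 * s := by nlinarith
  set y : ℝ := 1 + 1 / s with hy
  have hy1 : 1 < y := by
    have h' : 0 < 1 / s := by positivity
    rw [hy]; linarith
  -- from h1 : ℓ < W g
  have hpi : 0 < Real.pi := Real.pi_pos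
  have h3 : 0 < Real.sqrt 3 := Real.sqrt_pos.mpr (by norm_num)
  have hW : W (g:ℝ) = Real.sqrt 3 / (4 * Real.pi) * (arcosh y) ^ 2 := rfl
  have hA0 : 0 < (arcosh y) ^ 2 := by
    by_contra h
    push_neg at h
    have : W (g:ℝ) ≤ 0 := by
      rw [hW]
      apply mul_nonpos_of_nonneg_of_nonpos (by positivity) h
    linarith
  have hApos : 0 < arcosh y := by
    rcases lt_trichotomy (arcosh y) 0 with h | h | h
    · exfalso
      have : (0:ℝ) ≤ Real.log (y + Real.sqrt (y ^ 2 - 1)) := by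
        apply Real.log_nonneg; nlinarith [Real.sqrt_nonneg (y ^ 2 - 1)]
      exact absurd this (by rw [arcosh] at h; linarith)
    · simp [h] at hA0
    · exact h
  have hkey : 4 * Real.pi * ℓ / Real.sqrt 3 < (arcosh y) ^ 2 := by
    rw [div_lt_iff₀ h3]
    rw [hW] at h1
    have h3sq : Real.sqrt 3 ^ 2 = 3 := Real.sq_sqrt (by norm_num)
    have := mul_lt_mul_of_pos_right h1 (show (0:ℝ) < 4 * Real.pi / Real.sqrt 3 by positivity)
    calc 4 * Real.pi * ℓ = ℓ * (4 * Real.pi / Real.sqrt 3) * Real.sqrt 3 := by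
          field_simp
      _ < Real.sqrt 3 / (4 * Real.pi) * (arcosh y) ^ 2 * (4 * Real.pi / Real.sqrt 3) * Real.sqrt 3 := by
          apply mul_lt_mul_of_pos_right this h3
      _ = (arcosh y) ^ 2 * Real.sqrt 3 := by field_simp
  have hsqrtlt : Real.sqrt (4 * Real.pi * ℓ / Real.sqrt 3) < arcosh y :=
    (Real.sqrt_lt' hApos).mpr hkey
  have hcoshlt : Real.cosh (Real.sqrt (4 * Real.pi * ℓ / Real.sqrt 3)) < y := by
    calc Real.cosh (Real.sqrt (4 * Real.pi * ℓ / Real.sqrt 3))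
        < Real.cosh (arcosh y) := by
          rw [Real.cosh_lt_cosh]
          rw [abs_of_nonneg (Real.sqrt_nonneg _), abs_of_pos hApos]
          exact hsqrtlt
      _ = y := cosh_arcosh hy1.le
  have hκlt : κ ℓ < 1 / s := by
    have : κ ℓ = Real.cosh (Real.sqrt (4 * Real.pi * ℓ / Real.sqrt 3)) - 1 := rfl
    rw [this]; rw [hy] at hcoshlt; linarith
  have hκpos : 0 < κ ℓ := by
    have harg : 0 < Real.sqrt (4 * Real.pi * ℓ / Real.sqrt 3) :=
      Real.sqrt_pos.mpr (by positivity)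
    have : 1 < Real.cosh (Real.sqrt (4 * Real.pi * ℓ / Real.sqrt 3)) :=
      Real.one_lt_cosh.mpr (ne_of_gt harg)
    have h' : κ ℓ = Real.cosh (Real.sqrt (4 * Real.pi * ℓ / Real.sqrt 3)) - 1 := rfl
    rw [h']; linarith
  set k : ℝ := κ ℓ with hk
  clear_value k
  clear_value a s y
  clear hk hy hs hW hA0 hApos hkey hsqrtlt hcoshlt hsq h1 h0 hr
  have hsk : s * k < 1 := by
    have := mul_lt_mul_of_pos_left hκlt hs0
    rwa [mul_one_div, div_self (ne_of_gt hs0)] at this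
  have hquad : (a * k) ^ 2 < 1 - 2 * k := by
    have hsk0 : 0 < s * k := mul_pos hs0 hκpos
    have h1' : (s * k) ^ 2 < 1 := by nlinarith
    have ha2 : (0:ℝ) < a ^ 2 := by positivity
    have h2' : a ^ 2 * (s * k) ^ 2 < a ^ 2 * 1 := by
      exact mul_lt_mul_of_pos_left h1' ha2
    have h2'' : 2 * s * (s * k) < 2 * s * 1 := by
      exact mul_lt_mul_of_pos_left hsk (by linarith)
    nlinarith
  have hak : a * k < Real.sqrt (1 - 2 * k) := by
    have hak0 : 0 ≤ a * k := mul_nonneg (by linarith) hκpos.le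
    exact (Real.lt_sqrt hak0).mpr hquad
  have hdiv : a < Real.sqrt (1 - 2 * k) / k := (lt_div_iff₀ hκpos).mpr hak
  have hc2 : ((2:ℝ) * (g:ℝ) - 1) ^ 2 < (Real.cosh r) ^ 2 := by
    rw [hcosh]
    have h' : a + 1 = 2 * (2 * (g:ℝ) - 1) ^ 2 := by rw [ha]; ring
    linarith
  have hcpos : 0 < Real.cosh r := Real.cosh_pos r
  have main : Real.cosh r > 2 * (g:ℝ) - 1 :=
    lt_of_pow_lt_pow_left₀ 2 hcpos.le hc2
  refine ⟨main, ?_⟩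
  have h2pi : (0:ℝ) < 2 * Real.pi := by positivity
  exact mul_lt_mul_of_pos_left (by linarith) h2pi
end

section
/- If 0 < ℓ < W(3/2), then the tube radius satisfies cosh(r₀(ℓ)) > 2. -/
lemma arcosh_nonneg {y : ℝ} (hy : 1 ≤ y) : 0 ≤ arcosh y := by
  have h1 : (0:ℝ) ≤ y ^ 2 - 1 := by nlinarith
  exact Real.log_nonneg (by linarith [Real.sqrt_nonneg (y ^ 2 - 1)])

theorem cosh_tube_radius_gt_two (ℓ : ℝ) (h0 : 0 < ℓ) (h1 : ℓ < W (3 / 2))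
    (r : ℝ) (hr : 0 < r)
    (hcosh : (Real.cosh r) ^ 2 = (1 / 2) * (Real.sqrt (1 - 2 * κ ℓ) / κ ℓ + 1)) :
    Real.cosh r > 2 := by
  have hπ : (0:ℝ) < Real.pi := Real.pi_pos
  have h3 : (0:ℝ) < Real.sqrt 3 := Real.sqrt_pos.mpr (by norm_num)
  set s := Real.sqrt 50 with hsdef
  have hs2 : s ^ 2 = 50 := Real.sq_sqrt (by norm_num)
  have hsn : 0 ≤ s := Real.sqrt_nonneg _
  have hs7 : 7 < s := by nlinarith
  set y : ℝ := 1 + 1 / (1 + s) with hydef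
  have hy1 : 1 < y := by
    rw [hydef]
    have : 0 < 1 / (1 + s) := by positivity
    linarith
  have hW : W (3/2) = Real.sqrt 3 / (4 * Real.pi) * (arcosh y) ^ 2 := by
    have h50 : (1 + (8 * (3/2:ℝ) ^ 2 - 8 * (3/2) + 1) ^ 2) = 50 := by norm_num
    rw [W, h50, hydef, hsdef]
  set t := Real.sqrt (4 * Real.pi * ℓ / Real.sqrt 3) with htdef
  have ht0 : 0 < t := Real.sqrt_pos.mpr (by positivity)
  have ht2 : t ^ 2 = 4 * Real.pi * ℓ / Real.sqrt 3 := Real.sq_sqrt (by positivity)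
  have hta : t < arcosh y := by
    refine lt_of_pow_lt_pow_left₀ 2 (arcosh_nonneg hy1.le) ?_
    rw [ht2]
    rw [hW] at h1
    rw [div_lt_iff₀ h3]
    calc 4 * Real.pi * ℓ
        < 4 * Real.pi * (Real.sqrt 3 / (4 * Real.pi) * (arcosh y) ^ 2) :=
          mul_lt_mul_of_pos_left h1 (by positivity)
      _ = (arcosh y) ^ 2 * Real.sqrt 3 := by field_simp
  have hcy : Real.cosh t < y := by
    have h := Real.cosh_lt_cosh (x := t) (y := arcosh y)
    rw [cosh_arcosh hy1.le] at h
    exact h.mpr (by rwa [abs_of_nonneg ht0.le, abs_of_nonneg (arcosh_nonneg hy1.le)])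
  set k := κ ℓ with hkdef
  have hk0 : 0 < k := by
    have := Real.one_lt_cosh.mpr ht0.ne'
    simp only [hkdef, κ]; rw [← htdef]; linarith
  have hkup : k * (1 + s) < 1 := by
    have hky : k < 1 / (1 + s) := by
      simp only [hkdef, κ]; rw [← htdef]; rw [hydef] at hcy; linarith
    have hps : 0 < 1 + s := by linarith
    calc k * (1 + s) < 1 / (1 + s) * (1 + s) := by
          exact mul_lt_mul_of_pos_right hky hps
      _ = 1 := by field_simp
  have hkey : 49 * k ^ 2 < 1 - 2 * k := by
    have h2 : 0 < (s - 1) * k + 1 := by nlinarith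
    nlinarith [mul_pos (by linarith : (0:ℝ) < 1 - k * (1 + s)) h2]
  have hsqrt : 7 * k < Real.sqrt (1 - 2 * k) :=
    Real.lt_sqrt_of_sq_lt (by nlinarith)
  have hdiv : 7 < Real.sqrt (1 - 2 * k) / k := by
    rw [lt_div_iff₀ hk0]; linarith
  have h4 : 4 < (Real.cosh r) ^ 2 := by rw [hcosh]; linarith
  nlinarith [Real.cosh_pos (x := r)]
end

section
/- If 0 < ℓ < W(3/2), then ℓ² · sinh²(r₀(ℓ)) < √3 ℓ/(4π). -/
theorem ell_sq_sinh_sq_lt (ℓ : ℝ) (h0 : 0 < ℓ) (h1 : ℓ < W (3 / 2))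
    (r : ℝ) (hr : 0 < r)
    (hcosh : (Real.cosh r) ^ 2 = (1 / 2) * (Real.sqrt (1 - 2 * κ ℓ) / κ ℓ + 1)) :
    ℓ ^ 2 * (Real.sinh r) ^ 2 < Real.sqrt 3 * ℓ / (4 * Real.pi) := by
  have hπ := Real.pi_pos
  have h3 : (0:ℝ) < Real.sqrt 3 := by positivity
  set t := Real.sqrt (4 * Real.pi * ℓ / Real.sqrt 3) with ht
  have htpos : 0 < t := Real.sqrt_pos.2 (by positivity)
  have ht2 : t ^ 2 = 4 * Real.pi * ℓ / Real.sqrt 3 := Real.sq_sqrt (by positivity)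
  have hκdef : κ ℓ = Real.cosh t - 1 := rfl
  have hsinhhalf := Real.self_lt_sinh_iff.2 (half_pos htpos)
  have hch : 1 + t ^ 2 / 2 < Real.cosh t := by
    have h2t : t = 2 * (t / 2) := by ring
    have hc := Real.cosh_two_mul (t / 2)
    have hs := Real.cosh_sq (t / 2)
    rw [h2t, hc, hs]
    nlinarith [hsinhhalf, half_pos htpos]
  have hκt : t ^ 2 / 2 < κ ℓ := by rw [hκdef]; linarith
  have hκpos : 0 < κ ℓ := by nlinarith [sq_nonneg t]
  have hs1 : Real.sqrt (1 - 2 * κ ℓ) ≤ 1 := by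
    calc Real.sqrt (1 - 2 * κ ℓ) ≤ Real.sqrt 1 := Real.sqrt_le_sqrt (by linarith)
    _ = 1 := Real.sqrt_one
  set S := Real.sqrt (1 - 2 * κ ℓ) with hSdef
  have hSnonneg : 0 ≤ S := Real.sqrt_nonneg _
  have hsinh2 : Real.sinh r ^ 2 = (S - κ ℓ) / (2 * κ ℓ) := by
    have h := Real.sinh_sq r
    rw [hcosh] at h
    rw [h]
    field_simp
    ring
  have hnum : t ^ 2 * (S - κ ℓ) < 2 * κ ℓ := by
    nlinarith [mul_pos (pow_pos htpos 2) hκpos,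
      mul_le_mul_of_nonneg_left hs1 (sq_nonneg t)]
  have key : t ^ 2 * Real.sinh r ^ 2 < 1 := by
    rw [hsinh2, mul_div_assoc']
    rw [div_lt_one (by positivity)]
    linarith
  have hrhs : Real.sqrt 3 * ℓ / (4 * Real.pi) = ℓ ^ 2 / t ^ 2 := by
    rw [ht2]
    field_simp
  rw [hrhs, lt_div_iff₀ (by positivity)]
  nlinarith [mul_lt_mul_of_pos_left key (pow_pos h0 2)]
end

section
/- (Theorem 3.4) Let ℓ and θ be real numbers with 0 < ℓ < W(3/2) and |θ| > (3π²)^{1/4} · √ℓ. Then π ℓ sinh(2 r₀(ℓ)) < |θ| cosh(r₀(ℓ)) < 2 ∫₀^{r₀(ℓ)} √(ℓ² cosh²(u) + θ² sinh²(u)) du. (Here π ℓ sinh(2r₀) is the area of the boundary torus of the maximal solid tube, and the integral expression is the area of the helicoidal minimal annulus inside the tube.) -/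
lemma cosh_arcosh_s12 {a : ℝ} (ha : 1 ≤ a) : Real.cosh (arcosh a) = a := by
  have h1 : (0:ℝ) ≤ a ^ 2 - 1 := by nlinarith
  have hs : Real.sqrt (a ^ 2 - 1) ^ 2 = a ^ 2 - 1 := Real.sq_sqrt h1
  have hsn : 0 ≤ Real.sqrt (a ^ 2 - 1) := Real.sqrt_nonneg _
  have hx : 0 < a + Real.sqrt (a ^ 2 - 1) := by nlinarith
  rw [arcosh, Real.cosh_eq, Real.exp_log hx, Real.exp_neg, Real.exp_log hx]
  have : (a + Real.sqrt (a ^ 2 - 1))⁻¹ = a - Real.sqrt (a ^ 2 - 1) := by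
    rw [inv_eq_iff_eq_inv, eq_comm, inv_eq_iff_eq_inv]
    · field_simp
      nlinarith
  rw [this]; ring

lemma arcosh_nonneg_s12 {a : ℝ} (ha : 1 ≤ a) : 0 ≤ arcosh a := by
  apply Real.log_nonneg
  have := Real.sqrt_nonneg (a ^ 2 - 1)
  linarith

set_option maxHeartbeats 2000000 in
theorem area_comparison (ℓ θ : ℝ) (h0 : 0 < ℓ) (h1 : ℓ < W (3 / 2))
    (hθ : |θ| > (3 * Real.pi ^ 2) ^ ((1 : ℝ) / 4) * Real.sqrt ℓ)
    (r : ℝ) (hr : 0 < r)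
    (hcosh : (Real.cosh r) ^ 2 = (1 / 2) * (Real.sqrt (1 - 2 * κ ℓ) / κ ℓ + 1)) :
    Real.pi * ℓ * Real.sinh (2 * r) < |θ| * Real.cosh r ∧
    |θ| * Real.cosh r <
      2 * ∫ u in (0 : ℝ)..r,
        Real.sqrt (ℓ ^ 2 * (Real.cosh u) ^ 2 + θ ^ 2 * (Real.sinh u) ^ 2) := by
  have hπ := Real.pi_pos
  have hs3 : (0:ℝ) < Real.sqrt 3 := Real.sqrt_pos.mpr (by norm_num)
  set t : ℝ := Real.sqrt (4 * Real.pi * ℓ / Real.sqrt 3) with htdef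
  have htpos : 0 < t := Real.sqrt_pos.mpr (by positivity)
  have ht2 : t ^ 2 = 4 * Real.pi * ℓ / Real.sqrt 3 := Real.sq_sqrt (by positivity)
  have hκ : κ ℓ = Real.cosh t - 1 := rfl
  have hκpos : 0 < κ ℓ := by
    rw [hκ]; have := Real.one_lt_cosh.mpr (ne_of_gt htpos); linarith
  -- lower bound κ ≥ t²/2
  have hκlb : t ^ 2 / 2 ≤ κ ℓ := by
    have h2 : Real.cosh t = 1 + 2 * Real.sinh (t / 2) ^ 2 := by
      have := Real.cosh_two_mul (t / 2)
      have h3 := Real.cosh_sq (t / 2)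
      rw [show 2 * (t / 2) = t by ring] at this
      rw [this, h3]; ring
    have h4 : t / 2 ≤ Real.sinh (t / 2) := Real.self_le_sinh_iff.mpr (by linarith)
    have h5 : (t / 2) ^ 2 ≤ Real.sinh (t / 2) ^ 2 := by
      have : 0 ≤ t / 2 := by linarith
      nlinarith
    rw [hκ, h2]; nlinarith
  -- upper bound κ < 1/(1+√50) from h1
  set s : ℝ := Real.sqrt 50 with hsdef
  have hs50 : s ^ 2 = 50 := Real.sq_sqrt (by norm_num)
  have hs1 : 1 < s := by
    rw [hsdef]
    nlinarith [Real.sq_sqrt (show (0:ℝ) ≤ 50 by norm_num), Real.sqrt_nonneg (50:ℝ)]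
  set a : ℝ := 1 + 1 / (1 + s) with hadef
  have ha1 : 1 < a := by rw [hadef]; have : 0 < 1 / (1 + s) := by positivity
                         linarith
  have hW : W (3 / 2) = Real.sqrt 3 / (4 * Real.pi) * (arcosh a) ^ 2 := by
    rw [W, hadef, hsdef]; norm_num
  have hta : t < arcosh a := by
    have hA : 0 ≤ arcosh a := arcosh_nonneg_s12 ha1.le
    have h1' : 4 * Real.pi * ℓ < Real.sqrt 3 * (arcosh a) ^ 2 := by
      rw [hW] at h1
      have h := mul_lt_mul_of_pos_left h1 (show (0:ℝ) < 4 * Real.pi by positivity)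
      have he : 4 * Real.pi * (Real.sqrt 3 / (4 * Real.pi) * (arcosh a) ^ 2) =
          Real.sqrt 3 * (arcosh a) ^ 2 := by field_simp
      linarith [h.trans_eq he]
    have ht2' : t ^ 2 < (arcosh a) ^ 2 := by
      rw [ht2, div_lt_iff₀ hs3]
      nlinarith
    nlinarith
  have hκub : κ ℓ * (1 + s) < 1 := by
    have : Real.cosh t < a := by
      calc Real.cosh t < Real.cosh (arcosh a) := by
            rw [Real.cosh_lt_cosh, abs_of_pos htpos,
              abs_of_nonneg (arcosh_nonneg_s12 ha1.le)]; exact hta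
        _ = a := cosh_arcosh_s12 ha1.le
    rw [hκ]
    have hss : 0 < 1 + s := by linarith
    rw [hadef] at this
    have := (sub_lt_sub_iff_right 1).mpr this
    calc (Real.cosh t - 1) * (1 + s) < (1 + 1 / (1 + s) - 1) * (1 + s) := by
          apply mul_lt_mul_of_pos_right _ hss
          linarith
      _ = 1 := by field_simp; ring
  have hκ1 : κ ℓ < 1 := by
    have hks : 0 < κ ℓ * s := mul_pos hκpos (by linarith)
    nlinarith [hκub, hks]
  -- sinh r bound
  have hsinh2 : Real.sinh r ^ 2 = (1 / 2) * (Real.sqrt (1 - 2 * κ ℓ) / κ ℓ - 1) := by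
    have h := Real.sinh_sq r
    rw [hcosh] at h
    rw [h]; ring
  have hsqle : Real.sqrt (1 - 2 * κ ℓ) ≤ 1 - κ ℓ := by
    have h6 : Real.sqrt (1 - 2 * κ ℓ) ≤ Real.sqrt ((1 - κ ℓ) ^ 2) :=
      Real.sqrt_le_sqrt (by nlinarith [sq_nonneg (κ ℓ)])
    rwa [Real.sqrt_sq (by linarith)] at h6
  have hsinhub : Real.sinh r ^ 2 ≤ Real.sqrt 3 / (4 * Real.pi * ℓ) := by
    have h7 : Real.sinh r ^ 2 * (2 * κ ℓ) = Real.sqrt (1 - 2 * κ ℓ) - κ ℓ := by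
      rw [hsinh2]; field_simp
    have h8 : Real.sinh r ^ 2 * t ^ 2 ≤ 1 := by
      have hsn : (0:ℝ) ≤ Real.sinh r ^ 2 := sq_nonneg _
      nlinarith
    have h9 : Real.sinh r ^ 2 ≤ 1 / t ^ 2 := by
      rw [le_div_iff₀ (by positivity)]; linarith
    have h10 : 1 / t ^ 2 = Real.sqrt 3 / (4 * Real.pi * ℓ) := by
      rw [ht2]; field_simp
    linarith [h9.trans_eq h10]
  have hθpos : 0 < |θ| := lt_of_le_of_lt (by positivity) hθ
  have hθsq : Real.sqrt 3 * Real.pi * ℓ < θ ^ 2 := by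
    have h10 : ((3 * Real.pi ^ 2) ^ ((1:ℝ)/4)) ^ 2 = Real.sqrt (3 * Real.pi ^ 2) := by
      rw [Real.sqrt_eq_rpow, ← Real.rpow_natCast ((3 * Real.pi ^ 2) ^ ((1:ℝ)/4)) 2,
        ← Real.rpow_mul (by positivity)]
      norm_num
    have h11 : Real.sqrt (3 * Real.pi ^ 2) = Real.sqrt 3 * Real.pi := by
      rw [Real.sqrt_mul (by norm_num), Real.sqrt_sq hπ.le]
    have h12 : (Real.sqrt ℓ) ^ 2 = ℓ := Real.sq_sqrt h0.le
    have h13 : ((3 * Real.pi ^ 2) ^ ((1:ℝ)/4) * Real.sqrt ℓ) ^ 2 < |θ| ^ 2 := by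
      apply pow_lt_pow_left₀ hθ (by positivity)
      norm_num
    rw [mul_pow, h10, h11, h12, sq_abs] at h13
    exact h13
  have hcoshpos : 0 < Real.cosh r := Real.cosh_pos r
  have hsinhpos : 0 < Real.sinh r := Real.sinh_pos_iff.mpr hr
  -- first inequality
  have first : Real.pi * ℓ * Real.sinh (2 * r) < |θ| * Real.cosh r := by
    rw [Real.sinh_two_mul]
    have key : 2 * Real.pi * ℓ * Real.sinh r < |θ| := by
      have hsq : (2 * Real.pi * ℓ * Real.sinh r) ^ 2 < |θ| ^ 2 := by
        have : (2 * Real.pi * ℓ) ^ 2 * Real.sinh r ^ 2 ≤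
            (2 * Real.pi * ℓ) ^ 2 * (Real.sqrt 3 / (4 * Real.pi * ℓ)) :=
          mul_le_mul_of_nonneg_left hsinhub (by positivity)
        have h14 : (2 * Real.pi * ℓ) ^ 2 * (Real.sqrt 3 / (4 * Real.pi * ℓ)) =
            Real.sqrt 3 * Real.pi * ℓ := by field_simp; ring
        rw [sq_abs]
        nlinarith
      nlinarith [abs_nonneg θ, mul_pos (mul_pos (mul_pos two_pos hπ) h0) hsinhpos]
    nlinarith
  refine ⟨first, ?_⟩
  -- cosh r > 2
  have hcosh2 : 2 < Real.cosh r := by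
    have h49 : 49 * κ ℓ ^ 2 + 2 * κ ℓ < 1 := by
      nlinarith [mul_pos hκpos (show (0:ℝ) < 1 + s by linarith)]
    have hsqrt7 : 7 * κ ℓ < Real.sqrt (1 - 2 * κ ℓ) := by
      rw [show (7:ℝ) * κ ℓ = 7 * κ ℓ by rfl]
      have := (Real.lt_sqrt (show (0:ℝ) ≤ 7 * κ ℓ by positivity)).mpr
        (show (7 * κ ℓ) ^ 2 < 1 - 2 * κ ℓ by nlinarith)
      exact this
    have h15 : 4 < Real.cosh r ^ 2 := by
      rw [hcosh]
      have : 7 < Real.sqrt (1 - 2 * κ ℓ) / κ ℓ := by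
        rw [lt_div_iff₀ hκpos]; linarith [hsqrt7]
      linarith
    nlinarith
  -- integral bound
  set f : ℝ → ℝ := fun u => Real.sqrt (ℓ ^ 2 * Real.cosh u ^ 2 + θ ^ 2 * Real.sinh u ^ 2)
    with hfdef
  have hcont : Continuous f := by
    apply Real.continuous_sqrt.comp
    continuity
  have hint : |θ| * (Real.cosh r - 1) ≤ ∫ u in (0:ℝ)..r, f u := by
    have hI : ∫ u in (0:ℝ)..r, |θ| * Real.sinh u = |θ| * (Real.cosh r - 1) := by
      rw [intervalIntegral.integral_const_mul]
      have : ∫ u in (0:ℝ)..r, Real.sinh u = Real.cosh r - Real.cosh 0 :=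
        intervalIntegral.integral_eq_sub_of_hasDerivAt
          (fun x _ => Real.hasDerivAt_cosh x)
          (Real.continuous_sinh.intervalIntegrable 0 r)
      rw [this, Real.cosh_zero]
    rw [← hI]
    apply intervalIntegral.integral_mono_on hr.le
    · exact (continuous_const.mul Real.continuous_sinh).intervalIntegrable 0 r
    · exact hcont.intervalIntegrable 0 r
    · intro x hx
      have hxs : 0 ≤ Real.sinh x := Real.sinh_nonneg_iff.mpr hx.1
      rw [hfdef]
      apply (Real.le_sqrt (by positivity) (by positivity)).mpr
      have : (|θ| * Real.sinh x) ^ 2 = θ ^ 2 * Real.sinh x ^ 2 := by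
        rw [mul_pow, sq_abs]
      rw [this]
      nlinarith [sq_nonneg (ℓ * Real.cosh x)]
  have : |θ| * Real.cosh r < 2 * (|θ| * (Real.cosh r - 1)) := by nlinarith
  calc |θ| * Real.cosh r < 2 * (|θ| * (Real.cosh r - 1)) := this
    _ ≤ 2 * ∫ u in (0:ℝ)..r, f u := by linarith
end

section
/- If 0 < ℓ < W((2+√3)/2), then the tube radius satisfies cosh(r₀(ℓ)) > √3 + 1. -/
set_option maxHeartbeats 1000000


theorem cosh_tube_radius_gt (ℓ : ℝ) (h0 : 0 < ℓ)
    (h1 : ℓ < W ((2 + Real.sqrt 3) / 2)) (r : ℝ) (hr : 0 < r)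
    (hcosh : (Real.cosh r) ^ 2 = (1 / 2) * (Real.sqrt (1 - 2 * κ ℓ) / κ ℓ + 1)) :
    Real.cosh r > Real.sqrt 3 + 1 := by
  have hπ := Real.pi_pos
  obtain ⟨s3, hs3def⟩ : ∃ s, Real.sqrt 3 = s := ⟨_, rfl⟩
  rw [hs3def] at h1 ⊢
  have hs3 : s3 ^ 2 = 3 := by rw [← hs3def]; exact Real.sq_sqrt (by norm_num)
  have hs3p : 0 < s3 := by rw [← hs3def]; exact Real.sqrt_pos.mpr (by norm_num)
  obtain ⟨S, hSdef⟩ : ∃ S, Real.sqrt (98 + 56 * s3) = S := ⟨_, rfl⟩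
  have hS2 : S ^ 2 = 98 + 56 * s3 := by rw [← hSdef]; exact Real.sq_sqrt (by positivity)
  have hSnn : 0 ≤ S := by rw [← hSdef]; exact Real.sqrt_nonneg _
  have hS1 : 1 < S := by
    rw [← hSdef]
    have h98 : (1:ℝ) < 98 + 56 * s3 := by linarith
    have := (Real.lt_sqrt (by norm_num : (0:ℝ) ≤ 1)).mpr (by nlinarith : (1:ℝ)^2 < 98 + 56 * s3)
    exact this
  have hxS : Real.sqrt (1 + (8 * ((2 + s3) / 2) ^ 2 - 8 * ((2 + s3) / 2) + 1) ^ 2) = S := by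
    rw [← hSdef]
    congr 1
    have hx : 8 * ((2 + s3) / 2) ^ 2 - 8 * ((2 + s3) / 2) + 1 = 7 + 4 * s3 := by
      linear_combination 2 * hs3
    rw [hx]; linear_combination 16 * hs3
  have hy1 : 1 < 1 + 1 / (1 + S) := by
    have : 0 < 1 / (1 + S) := by positivity
    linarith
  obtain ⟨A, hAdef⟩ : ∃ A, arcosh (1 + 1 / (1 + S)) = A := ⟨_, rfl⟩
  have hAnn : 0 ≤ A := hAdef ▸ arcosh_nonneg hy1.le
  have hcoshA : Real.cosh A = 1 + 1 / (1 + S) := by rw [← hAdef]; exact cosh_arcosh hy1.le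
  have hW : W ((2 + s3) / 2) = s3 / (4 * Real.pi) * A ^ 2 := by
    unfold W
    rw [show Real.sqrt 3 = s3 from hs3def, hxS, hAdef]
  rw [hW] at h1
  have h1' : ℓ * (4 * Real.pi) < s3 * A ^ 2 := by
    rw [div_mul_eq_mul_div, lt_div_iff₀ (by positivity)] at h1; linarith
  have ht2 : 4 * Real.pi * ℓ / s3 < A ^ 2 := by
    rw [div_lt_iff₀ hs3p]; linarith
  have hκ : κ ℓ = Real.cosh (Real.sqrt (4 * Real.pi * ℓ / s3)) - 1 := by
    rw [κ, hs3def]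
  obtain ⟨t, htdef⟩ : ∃ t, Real.sqrt (4 * Real.pi * ℓ / s3) = t := ⟨_, rfl⟩
  rw [htdef] at hκ
  have htpos : 0 < t := by rw [← htdef]; exact Real.sqrt_pos.mpr (by positivity)
  have htA : t < A := by
    rw [← htdef]
    have := Real.sqrt_lt_sqrt (by positivity) ht2
    rwa [Real.sqrt_sq hAnn] at this
  have hcoshlt : Real.cosh t < Real.cosh A := by
    rw [Real.cosh_lt_cosh, abs_of_nonneg htpos.le, abs_of_nonneg hAnn]; exact htA
  have hcosht1 : 1 < Real.cosh t := Real.one_lt_cosh.mpr (ne_of_gt htpos)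
  obtain ⟨c, hcdef⟩ : ∃ c, κ ℓ = c := ⟨_, rfl⟩
  rw [hcdef] at hcosh
  have hc0 : 0 < c := by rw [← hcdef, hκ]; linarith
  have hcub : (1 + S) * c < 1 := by
    have h2 : c < 1 / (1 + S) := by
      rw [← hcdef, hκ]
      rw [hcoshA] at hcoshlt
      linarith
    calc (1 + S) * c < (1 + S) * (1 / (1 + S)) :=
          mul_lt_mul_of_pos_left h2 (by linarith)
      _ = 1 := by field_simp
  have hprod : ((1 + S) * c - 1) * ((S - 1) * c + 1) < 0 := by
    apply mul_neg_of_neg_of_pos (by linarith)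
    have : 0 < (S - 1) * c := mul_pos (by linarith) hc0
    linarith
  have hexp : ((1 + S) * c - 1) * ((S - 1) * c + 1) = (S ^ 2 - 1) * c ^ 2 + 2 * c - 1 := by
    ring
  have h97 : (7 + 4 * s3) ^ 2 = S ^ 2 - 1 := by linear_combination 16 * hs3 - hS2
  have hq := hprod
  rw [hexp] at hq
  have hkey : ((7 + 4 * s3) * c) ^ 2 < 1 - 2 * c := by
    rw [mul_pow, h97]; linarith
  have hsqrt : (7 + 4 * s3) * c < Real.sqrt (1 - 2 * c) :=
    (Real.lt_sqrt (by positivity)).mpr hkey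
  have hdiv : 7 + 4 * s3 < Real.sqrt (1 - 2 * c) / c := by
    rw [lt_div_iff₀ hc0]; exact hsqrt
  have hcosh2 : (Real.cosh r) ^ 2 > 4 + 2 * s3 := by
    rw [hcosh]; linarith [hdiv]
  have hsq : (s3 + 1) ^ 2 = 4 + 2 * s3 := by linear_combination hs3
  have : (s3 + 1) ^ 2 < Real.cosh r ^ 2 := by rw [hsq]; linarith
  exact lt_of_pow_lt_pow_left₀ 2 (Real.cosh_pos r).le this
end

section
/- (Key estimate of Lemma 3.9) Let ℓ and θ be real numbers with 0 < ℓ < W((2+√3)/2) and |θ| > (3π²)^{1/4} · √ℓ. Then 2|θ| (cosh(r₀(ℓ)) − cosh(r₀(ℓ)/2)) > |θ| cosh(r₀(ℓ)) > π ℓ sinh(2 r₀(ℓ)); in particular, the area lower bound 2|θ|(cosh(r₀) − cosh(r₀/2)) for any incompressible piece of a least-area surface entering the half-radius tube strictly exceeds the area π ℓ sinh(2r₀) of the boundary torus of the maximal solid tube. -/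
theorem key_separation_estimate (ℓ θ : ℝ) (h0 : 0 < ℓ)
    (h1 : ℓ < W ((2 + Real.sqrt 3) / 2))
    (hθ : |θ| > (3 * Real.pi ^ 2) ^ ((1 : ℝ) / 4) * Real.sqrt ℓ)
    (r : ℝ) (hr : 0 < r)
    (hcosh : (Real.cosh r) ^ 2 = (1 / 2) * (Real.sqrt (1 - 2 * κ ℓ) / κ ℓ + 1)) :
    2 * |θ| * (Real.cosh r - Real.cosh (r / 2)) > |θ| * Real.cosh r ∧
    |θ| * Real.cosh r > Real.pi * ℓ * Real.sinh (2 * r) := by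
  have hπ := Real.pi_pos
  have h3 : Real.sqrt 3 ^ 2 = 3 := Real.sq_sqrt (by norm_num)
  have h3pos : (0:ℝ) < Real.sqrt 3 := Real.sqrt_pos.mpr (by norm_num)
  set t := Real.sqrt (4 * Real.pi * ℓ / Real.sqrt 3) with ht
  have htarg : 0 < 4 * Real.pi * ℓ / Real.sqrt 3 := by positivity
  have htpos : 0 < t := Real.sqrt_pos.mpr htarg
  have ht2 : t ^ 2 = 4 * Real.pi * ℓ / Real.sqrt 3 := Real.sq_sqrt htarg.le
  have hκ : κ ℓ = Real.cosh t - 1 := by simp only [κ, ht]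
  have hκpos : 0 < κ ℓ := by
    rw [hκ]
    have := Real.one_lt_cosh.mpr (ne_of_gt htpos)
    linarith
  -- κ > t²/2
  have hκge : t ^ 2 / 2 < κ ℓ := by
    have hd : Real.cosh t = 2 * Real.sinh (t/2) ^ 2 + 1 := by
      have h1' := Real.cosh_two_mul (t/2)
      have h2' := Real.cosh_sq (t/2)
      rw [show 2 * (t/2) = t by ring] at h1'
      linarith
    have hs : t/2 < Real.sinh (t/2) := Real.self_lt_sinh_iff.mpr (by linarith)
    rw [hκ, hd]
    nlinarith only [hs, htpos]
  -- simplify W argument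
  have hA : 8 * ((2 + Real.sqrt 3)/2) ^ 2 - 8 * ((2 + Real.sqrt 3)/2) + 1
      = 7 + 4 * Real.sqrt 3 := by linear_combination 2 * h3
  set A : ℝ := 7 + 4 * Real.sqrt 3 with hAdef
  have hApos : (0:ℝ) < A := by positivity
  set s : ℝ := Real.sqrt (1 + A ^ 2) with hsdef
  have hs2 : s ^ 2 = 1 + A ^ 2 := Real.sq_sqrt (by positivity)
  have hspos : 0 < s := Real.sqrt_pos.mpr (by positivity)
  have hs1 : 1 ≤ s := by nlinarith only [hs2, hspos, sq_nonneg A]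
  set y : ℝ := 1 + 1 / (1 + s) with hy
  have hy1 : 1 < y := by
    have : 0 < 1 / (1 + s) := by positivity
    simp only [hy]; linarith
  have hW : W ((2 + Real.sqrt 3)/2) = (Real.sqrt 3 / (4 * Real.pi)) * (arcosh y) ^ 2 := by
    rw [W, hA]
  -- cosh (arcosh y) = y
  have hy2 : (0:ℝ) ≤ y ^ 2 - 1 := by nlinarith
  have hsq : Real.sqrt (y^2-1) ^ 2 = y^2 - 1 := Real.sq_sqrt hy2
  have hupos : 0 < y + Real.sqrt (y^2-1) := by
    have := Real.sqrt_nonneg (y^2-1); linarith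
  have hcosh_arcosh : Real.cosh (arcosh y) = y := by
    rw [arcosh, Real.cosh_eq, Real.exp_log hupos, Real.exp_neg, Real.exp_log hupos]
    field_simp
    linear_combination hsq
  have hapos : 0 < arcosh y := Real.log_pos (by
    have := Real.sqrt_nonneg (y^2-1); linarith)
  obtain ⟨a, ha, hacosh, hapos'⟩ : ∃ a : ℝ, a = arcosh y ∧ Real.cosh a = y ∧ 0 < a :=
    ⟨arcosh y, rfl, hcosh_arcosh, hapos⟩
  rw [← ha] at hW
  clear hcosh_arcosh hapos
  -- t < a
  have htly : t < a := by
    rw [hW] at h1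
    have hmul : t ^ 2 * Real.sqrt 3 = 4 * Real.pi * ℓ := by
      rw [ht2]; field_simp
    have h4 : 4 * Real.pi * ℓ < Real.sqrt 3 * a ^ 2 := by
      rw [div_mul_eq_mul_div, lt_div_iff₀ (by positivity)] at h1
      linarith
    have ht2lt : t ^ 2 < a ^ 2 := by nlinarith only [hmul, h4, h3pos]
    exact lt_of_pow_lt_pow_left₀ 2 hapos'.le ht2lt
  have hκlt : κ ℓ * (1 + s) < 1 := by
    have hcc : Real.cosh t < Real.cosh a := by
      rw [Real.cosh_lt_cosh, abs_of_pos htpos, abs_of_pos hapos']; exact htly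
    rw [hacosh] at hcc
    have hκy : κ ℓ < 1 / (1 + s) := by rw [hκ]; simp only [hy] at hcc; linarith
    have : 0 < 1 + s := by linarith
    calc κ ℓ * (1 + s) < 1 / (1 + s) * (1 + s) := by
          exact mul_lt_mul_of_pos_right hκy this
      _ = 1 := by field_simp
  -- √(1-2κ) > Aκ
  have hsk : 0 ≤ (s - 1) * κ ℓ := mul_nonneg (by linarith) hκpos.le
  have hsqrtA : A * κ ℓ < Real.sqrt (1 - 2 * κ ℓ) := by
    rw [Real.lt_sqrt (by positivity)]
    nlinarith only [hs2, hκlt, hsk, hκpos, hspos, sq_nonneg (κ ℓ)]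
  have hdivA : A < Real.sqrt (1 - 2 * κ ℓ) / κ ℓ := by
    rw [lt_div_iff₀ hκpos]; linarith only [hsqrtA]
  have hcr2 : 4 + 2 * Real.sqrt 3 < Real.cosh r ^ 2 := by
    rw [hcosh]; simp only [hAdef] at hdivA; linarith only [hdivA]
  have hcoshpos : 0 < Real.cosh r := Real.cosh_pos r
  have hcr : 1 + Real.sqrt 3 < Real.cosh r := by nlinarith only [hcr2, h3, hcoshpos, h3pos]
  have hθpos : 0 < |θ| := lt_of_le_of_lt (by positivity) hθ
  -- first inequality
  have hhalf : Real.cosh r = 2 * Real.cosh (r/2)^2 - 1 := by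
    have h1' := Real.cosh_two_mul (r/2)
    have h2' := Real.cosh_sq (r/2)
    rw [show 2 * (r/2) = r by ring] at h1'
    linarith
  have hc2 : 1 ≤ Real.cosh (r/2) := Real.one_le_cosh _
  have hc2' : 1 + Real.sqrt 3 < 2 * Real.cosh (r/2) := by nlinarith only [hcr, hhalf, hc2, h3, h3pos]
  have hgt : 2 * Real.cosh (r/2) < Real.cosh r := by
    nlinarith only [hc2', h3, h3pos, hhalf, hc2]
  constructor
  · nlinarith only [mul_pos hθpos (by linarith only [hgt] : (0:ℝ) < Real.cosh r - 2 * Real.cosh (r/2))]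
  -- second inequality
  · have hsinhpos : 0 < Real.sinh r := Real.sinh_pos_iff.mpr hr
    have hsinh2 : Real.sinh r ^ 2 = Real.cosh r ^ 2 - 1 := by
      have := Real.cosh_sq r; linarith only [this]
    have hkey : 2 * κ ℓ * Real.cosh r ^ 2 = Real.sqrt (1 - 2 * κ ℓ) + κ ℓ := by
      rw [hcosh]; field_simp
    have hsqle : Real.sqrt (1 - 2 * κ ℓ) ≤ 1 := by
      calc Real.sqrt (1 - 2 * κ ℓ) ≤ Real.sqrt 1 :=
            Real.sqrt_le_sqrt (by linarith only [hκpos])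
        _ = 1 := Real.sqrt_one
    have hbound : Real.sinh r ^ 2 * (2 * κ ℓ) ≤ 1 - κ ℓ := by nlinarith only [hkey, hsqle, hsinh2]
    -- sinh² * t² < 1
    have hb2 : Real.sinh r ^ 2 * t ^ 2 < 1 := by
      nlinarith only [hbound, hκge, hκpos, sq_nonneg (Real.sinh r), htpos, sq_nonneg t]
    have hb3 : 4 * Real.pi ^ 2 * ℓ ^ 2 * Real.sinh r ^ 2 < Real.sqrt 3 * Real.pi * ℓ := by
      have hmul : t ^ 2 * Real.sqrt 3 = 4 * Real.pi * ℓ := by rw [ht2]; field_simp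
      have hb2' : Real.sinh r ^ 2 * (4 * Real.pi * ℓ) < Real.sqrt 3 := by
        nlinarith only [hb2, hmul, h3pos, sq_nonneg (Real.sinh r)]
      nlinarith only [hb2', hπ, h0, mul_pos hπ h0]
    -- |θ|² > √3 π ℓ
    have hq2 : ((3 * Real.pi ^ 2) ^ ((1:ℝ)/4)) ^ 2 = Real.sqrt (3 * Real.pi ^ 2) := by
      rw [← Real.rpow_natCast ((3 * Real.pi ^ 2) ^ ((1:ℝ)/4)) 2,
        ← Real.rpow_mul (by positivity), Real.sqrt_eq_rpow]
      norm_num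
    have hs3pi : Real.sqrt (3 * Real.pi ^ 2) = Real.sqrt 3 * Real.pi := by
      rw [Real.sqrt_mul (by norm_num), Real.sqrt_sq hπ.le]
    have hθ2 : Real.sqrt 3 * Real.pi * ℓ < |θ| ^ 2 := by
      have hlhs : ((3 * Real.pi ^ 2) ^ ((1:ℝ)/4) * Real.sqrt ℓ) ^ 2
          = Real.sqrt 3 * Real.pi * ℓ := by
        rw [mul_pow, hq2, hs3pi, Real.sq_sqrt h0.le]
      have := pow_lt_pow_left₀ hθ (by positivity) (n := 2) (by norm_num)
      rw [hlhs] at this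
      exact this
    have hfin : 2 * Real.pi * ℓ * Real.sinh r < |θ| := by
      nlinarith only [hθ2, hb3, hθpos, mul_pos (mul_pos (mul_pos (by norm_num : (0:ℝ)<2) hπ) h0) hsinhpos]
    rw [Real.sinh_two_mul]
    nlinarith only [mul_lt_mul_of_pos_right hfin hcoshpos]
end

section
/- (Inequality (5.6)) There exists ε > 0 such that for all ℓ with 0 < ℓ < ε, one has √ℓ · (cosh(r₀(ℓ)) − 1) > 1/(2b), where b = √(4π/√3). -/
lemma cosh_sub_one_le_sq {t : ℝ} (ht0 : 0 ≤ t) (ht : t ≤ 1/10) :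
    Real.cosh t - 1 ≤ t ^ 2 := by
  have h1 := Real.add_one_le_exp t
  have h2 := Real.add_one_le_exp (-t)
  have hp : 0 < Real.exp t := Real.exp_pos t
  have hp' : 0 < Real.exp (-t) := Real.exp_pos (-t)
  have hmul : Real.exp t * Real.exp (-t) = 1 := by
    rw [← Real.exp_add]; simp
  rw [Real.cosh_eq]
  nlinarith [sq_nonneg (Real.exp t - 1 - t), sq_nonneg (Real.exp t - 1),
    mul_pos hp hp', sq_nonneg t]

set_option maxHeartbeats 1000000 in
theorem sqrt_ell_cosh_lower_bound :
    ∃ ε > (0 : ℝ), ∀ ℓ : ℝ, 0 < ℓ → ℓ < ε →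
      Real.sqrt ℓ * (Real.cosh (r₀ ℓ) - 1) >
        1 / (2 * Real.sqrt (4 * Real.pi / Real.sqrt 3)) := by
  have h3 : (0:ℝ) < Real.sqrt 3 := Real.sqrt_pos.mpr (by norm_num)
  set B : ℝ := 4 * Real.pi / Real.sqrt 3 with hBdef
  have hB : 0 < B := by
    have := Real.pi_pos
    positivity
  refine ⟨1 / (100 * B), by positivity, ?_⟩
  intro ℓ hℓ hℓε
  set b := Real.sqrt B with hbdef
  have hb : 0 < b := Real.sqrt_pos.mpr hB
  have hb2 : b ^ 2 = B := Real.sq_sqrt hB.le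
  set t := Real.sqrt (B * ℓ) with htdef
  have ht0 : 0 ≤ t := Real.sqrt_nonneg _
  have ht2 : t ^ 2 = B * ℓ := Real.sq_sqrt (by positivity)
  have hBl : B * ℓ < 1 / 100 := by
    calc B * ℓ < B * (1 / (100 * B)) := by
          exact mul_lt_mul_of_pos_left hℓε hB
      _ = 1 / 100 := by field_simp
  have htlt : t < 1 / 10 := by nlinarith
  have hκeq : κ ℓ = Real.cosh t - 1 := by
    have harg : 4 * Real.pi * ℓ / Real.sqrt 3 = B * ℓ := by rw [hBdef]; ring
    rw [κ, harg]
  have htne : t ≠ 0 := by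
    have : 0 < t ^ 2 := by rw [ht2]; positivity
    intro h; rw [h] at this; norm_num at this
  have hκpos : 0 < κ ℓ := by
    rw [hκeq]
    have := Real.one_lt_cosh.mpr htne
    linarith
  have hκle : κ ℓ ≤ t ^ 2 := by
    rw [hκeq]; exact cosh_sub_one_le_sq ht0 htlt.le
  have hκsmall : κ ℓ ≤ 1 / 100 := by nlinarith
  set k := κ ℓ with hkdef
  have hyarg : 0 ≤ (1 / 2) * (Real.sqrt (1 - 2 * k) / k + 1) := by
    have := Real.sqrt_nonneg (1 - 2 * k)
    positivity
  set y := Real.sqrt ((1 / 2) * (Real.sqrt (1 - 2 * k) / k + 1)) with hydef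
  have hy0 : 0 ≤ y := Real.sqrt_nonneg _
  have hy2 : y ^ 2 = (1 / 2) * (Real.sqrt (1 - 2 * k) / k + 1) := Real.sq_sqrt hyarg
  have hsk : 1 - 2 * k ≤ Real.sqrt (1 - 2 * k) := by
    have h1 : (1 - 2 * k) ^ 2 ≤ 1 - 2 * k := by nlinarith
    calc 1 - 2 * k = Real.sqrt ((1 - 2 * k) ^ 2) := by
          rw [Real.sqrt_sq (by linarith)]
      _ ≤ Real.sqrt (1 - 2 * k) := Real.sqrt_le_sqrt h1
  have hy2'' : 1 - k ≤ 2 * k * y ^ 2 := by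
    have : 2 * k * y ^ 2 = Real.sqrt (1 - 2 * k) + k := by
      rw [hy2]; field_simp
    rw [this]; linarith
  have hy1 : 1 ≤ y := by nlinarith
  have hcosh : Real.cosh (r₀ ℓ) = y := by
    rw [r₀, ← hkdef, ← hydef]; exact cosh_arcosh hy1
  have hsl : Real.sqrt ℓ = t / b := by
    rw [htdef, Real.sqrt_mul hB.le, ← hbdef, mul_div_cancel_left₀ _ hb.ne']
  have hsly : (0.6:ℝ) / b < Real.sqrt ℓ * y := by
    have hx2 : (Real.sqrt ℓ * y) ^ 2 = ℓ * y ^ 2 := by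
      rw [mul_pow, Real.sq_sqrt hℓ.le]
    have h06 : ((0.6:ℝ) / b) ^ 2 = 0.36 / B := by rw [div_pow, hb2]; norm_num
    have hlt : ((0.6:ℝ) / b) ^ 2 < (Real.sqrt ℓ * y) ^ 2 := by
      rw [h06, hx2, div_lt_iff₀ hB]
      have hkb : k ≤ B * ℓ := by rw [← ht2]; exact hκle
      have hky : 2 * k * y ^ 2 ≤ 2 * (B * ℓ) * y ^ 2 := by
        nlinarith [mul_nonneg (sub_nonneg.mpr hkb) (sq_nonneg y)]
      linarith [hy2'', hκsmall, hky]
    exact lt_of_pow_lt_pow_left₀ 2 (mul_nonneg (Real.sqrt_nonneg ℓ) hy0) hlt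
  rw [hcosh, gt_iff_lt, div_lt_iff₀ (by positivity : (0:ℝ) < 2 * b)]
  have hbl : b * Real.sqrt ℓ = t := by
    rw [hsl, mul_div_cancel₀ _ hb.ne']
  have h3' : (0.6:ℝ) < b * (Real.sqrt ℓ * y) := by
    have := mul_lt_mul_of_pos_right hsly hb
    have h1 : (0.6:ℝ) / b * b = 0.6 := div_mul_cancel₀ _ hb.ne'
    nlinarith [this, h1]
  nlinarith [h3', htlt, hbl]
end

section
/- (Computational core of Corollary 5.2) Let g ≥ 2 be an integer. There exists ε > 0 such that for all real ℓ with 0 < ℓ < ε and all real θ satisfying |θ| < 2π(g − 1)/(cosh(r₀(ℓ)) − 1), one has |θ|/√ℓ < 4π √(4π/√3) · (g − 1). -/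
lemma exp_mul_one_sub_le {t : ℝ} : Real.exp t * (1 - t) ≤ 1 := by
  have h1 := Real.add_one_le_exp (-t)
  have h2 : Real.exp t * Real.exp (-t) = 1 := by rw [← Real.exp_add]; simp
  nlinarith [Real.exp_pos t]

lemma half_sq_le_cosh_sub_one {s : ℝ} (hs : 0 < s) : s ^ 2 / 2 ≤ Real.cosh s - 1 := by
  have h := Real.self_lt_sinh_iff.mpr (by linarith : 0 < s / 2)
  have h2 : Real.cosh (2 * (s / 2)) = Real.cosh (s / 2) ^ 2 + Real.sinh (s / 2) ^ 2 :=
    Real.cosh_two_mul _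
  have h3 : Real.cosh (s / 2) ^ 2 = Real.sinh (s / 2) ^ 2 + 1 := Real.cosh_sq _
  have h4 : (2 : ℝ) * (s / 2) = s := by ring
  rw [h4] at h2
  nlinarith

lemma key_aux {s a : ℝ} (hspos : 0 < s) (hsle : s ≤ 1 / 10) (hssq : s ^ 2 = a) :
    (1 + 1 / (2 * s)) ^ 2 ≤ 0.49 / (0.51 * a) := by
  have hapos : 0 < a := hssq ▸ by positivity
  rw [le_div_iff₀ (by positivity), ← hssq]
  have hsne : s ≠ 0 := hspos.ne'
  have expand : (1 + 1 / (2 * s)) ^ 2 * (0.51 * s ^ 2) = 0.51 / 4 * (2 * s + 1) ^ 2 := by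
    field_simp; ring
  rw [expand]; nlinarith

theorem rotation_ratio_upper_bound (g : ℕ) (hg : 2 ≤ g) :
    ∃ ε > (0 : ℝ), ∀ ℓ θ : ℝ, 0 < ℓ → ℓ < ε →
      |θ| < 2 * Real.pi * ((g : ℝ) - 1) / (Real.cosh (r₀ ℓ) - 1) →
      |θ| / Real.sqrt ℓ <
        4 * Real.pi * Real.sqrt (4 * Real.pi / Real.sqrt 3) * ((g : ℝ) - 1) := by
  have hpi := Real.pi_pos
  have hsqrt3 : 0 < Real.sqrt 3 := Real.sqrt_pos.mpr (by norm_num)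
  refine ⟨Real.sqrt 3 / (400 * Real.pi), by positivity, fun ℓ θ hℓ hℓε hθ => ?_⟩
  have hg2 : (2 : ℝ) ≤ (g : ℝ) := by exact_mod_cast hg
  set a : ℝ := 4 * Real.pi * ℓ / Real.sqrt 3 with ha
  have hapos : 0 < a := by positivity
  have halt : a < 1 / 100 := by
    have h1 : a < 4 * Real.pi * (Real.sqrt 3 / (400 * Real.pi)) / Real.sqrt 3 := by
      rw [ha]; gcongr
    have h2 : 4 * Real.pi * (Real.sqrt 3 / (400 * Real.pi)) / Real.sqrt 3 = 1 / 100 := by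
      field_simp; ring
    linarith
  set s : ℝ := Real.sqrt a with hsdef
  have hspos : 0 < s := Real.sqrt_pos.mpr hapos
  have hssq : s ^ 2 = a := Real.sq_sqrt hapos.le
  have hsle : s ≤ 1 / 10 := by nlinarith
  clear_value s a
  -- bounds on κ ℓ
  have hκdef : κ ℓ = Real.cosh s - 1 := by unfold κ; rw [hsdef, ha]
  have hκlo : a / 2 ≤ κ ℓ := by
    rw [hκdef]; have := half_sq_le_cosh_sub_one hspos; linarith [hssq ▸ this]
  have hκhi : κ ℓ ≤ 0.51 * a := by
    rw [hκdef]
    have h1 : Real.cosh s ≤ Real.exp (s ^ 2 / 2) := Real.cosh_le_exp_half_sq s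
    have h2 : Real.exp (s ^ 2 / 2) * (1 - s ^ 2 / 2) ≤ 1 := exp_mul_one_sub_le
    have h3 : (0:ℝ) < 1 - s ^ 2 / 2 := by nlinarith
    have h4 : Real.exp (s ^ 2 / 2) ≤ 1 / (1 - s ^ 2 / 2) := by
      rw [le_div_iff₀ h3]; exact h2
    have h5 : 1 / (1 - s ^ 2 / 2) - 1 ≤ 0.51 * a := by
      rw [div_sub_one h3.ne', div_le_iff₀ h3]
      nlinarith
    linarith
  have hκpos : 0 < κ ℓ := lt_of_lt_of_le (by linarith) hκlo
  have hκsmall : κ ℓ ≤ 0.0051 := by nlinarith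
  -- lower bound on u
  set u : ℝ := (1 / 2) * (Real.sqrt (1 - 2 * κ ℓ) / κ ℓ + 1) with hu
  clear_value u
  have hsq1 : (1 - 2 * κ ℓ) ≤ Real.sqrt (1 - 2 * κ ℓ) := by
    have h := Real.sqrt_le_sqrt (show (1 - 2 * κ ℓ) ^ 2 ≤ 1 - 2 * κ ℓ by nlinarith)
    rwa [Real.sqrt_sq (by linarith)] at h
  have hulo : 0.49 / κ ℓ ≤ u := by
    have h2 : 0.98 / κ ℓ ≤ Real.sqrt (1 - 2 * κ ℓ) / κ ℓ := by
      gcongr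
      linarith
    have h3 : (0:ℝ) < 0.98 / κ ℓ := by positivity
    have h7 : 0.49 / κ ℓ * 2 = 0.98 / κ ℓ := by ring
    rw [hu]; linarith
  have h6 : (0.49:ℝ) / (0.51 * a) ≤ 0.49 / κ ℓ := by
    apply div_le_div_of_nonneg_left (by norm_num) hκpos hκhi
  have key : (1 + 1 / (2 * s)) ^ 2 ≤ 0.49 / (0.51 * a) := key_aux hspos hsle hssq
  have huge : (1 + 1 / (2 * s)) ^ 2 ≤ u := le_trans key (le_trans h6 hulo)
  have h1s : (0:ℝ) ≤ 1 + 1 / (2 * s) := by positivity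
  have hsqrtu : 1 + 1 / (2 * s) ≤ Real.sqrt u := by
    have h := Real.sqrt_le_sqrt huge
    rwa [Real.sqrt_sq h1s] at h
  have hone : (1:ℝ) ≤ Real.sqrt u := by
    have : (0:ℝ) < 1 / (2 * s) := by positivity
    linarith
  have hr : r₀ ℓ = arcosh (Real.sqrt u) := by unfold r₀; rw [hu]
  have hcosh : Real.cosh (r₀ ℓ) = Real.sqrt u := by rw [hr]; exact cosh_arcosh hone
  have hC : 1 / (2 * s) ≤ Real.cosh (r₀ ℓ) - 1 := by rw [hcosh]; linarith
  have hCpos : 0 < Real.cosh (r₀ ℓ) - 1 := lt_of_lt_of_le (by positivity) hC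
  have h2sC : 1 ≤ (Real.cosh (r₀ ℓ) - 1) * (2 * s) := by
    rwa [div_le_iff₀ (by positivity)] at hC
  have hgpos : (0:ℝ) ≤ 2 * Real.pi * ((g:ℝ) - 1) := by
    have : (1:ℝ) ≤ (g:ℝ) - 1 := by linarith
    positivity
  have hA : 2 * Real.pi * ((g : ℝ) - 1) / (Real.cosh (r₀ ℓ) - 1)
      ≤ 2 * Real.pi * ((g : ℝ) - 1) * (2 * s) := by
    rw [div_le_iff₀ hCpos]
    have h8 := mul_le_mul_of_nonneg_left h2sC hgpos
    linarith
  have hs_split : s = Real.sqrt (4 * Real.pi / Real.sqrt 3) * Real.sqrt ℓ := by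
    rw [hsdef, ha, show 4 * Real.pi * ℓ / Real.sqrt 3 = (4 * Real.pi / Real.sqrt 3) * ℓ by ring,
      Real.sqrt_mul (by positivity)]
  rw [div_lt_iff₀ (Real.sqrt_pos.mpr hℓ)]
  calc |θ| < 2 * Real.pi * ((g : ℝ) - 1) / (Real.cosh (r₀ ℓ) - 1) := hθ
    _ ≤ 2 * Real.pi * ((g : ℝ) - 1) * (2 * s) := hA
    _ = 4 * Real.pi * Real.sqrt (4 * Real.pi / Real.sqrt 3) * ((g : ℝ) - 1) * Real.sqrt ℓ := by
        rw [hs_split]; ring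
end
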